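/- arXiv:1603.01442 — 5 statements merged into one kernel-verified Lean document; each statement's English description precedes it below -/
import Mathlib

section
/- Let g:(1,∞)→ℝ⁺ be continuous, positive and differentiable, satisfying lim_{z→1⁺} z^{g(z)} = 1, lim_{z→∞} z^{g(z)} = ∞, and g'(z)/g(z) > -1/(z log z) for all z > 1. Then for σ > 0, the function F(x) = 1 - (x/σ)^{-g(x/σ)} for x > σ and F(x) = 0 for x ≤ σ is a genuine cumulative distribution function: it is nondecreasing, right-continuous, tends to 0 at -∞ and to 1 at +∞. -/
open Real Filter Set Topology

/-- If g:(1,∞)→ℝ⁺ is continuous, positive and differentiable with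
lim_{z→1⁺} z^{g z} = 1, lim_{z→∞} z^{g z} = ∞ and g'(z)/g(z) > -1/(z log z) on (1,∞),
then F(x) = 1 - (x/σ)^{-g(x/σ)} for x > σ, F(x) = 0 otherwise, is a genuine cdf. -/
theorem gpl_is_cdf (g : ℝ → ℝ) (σ : ℝ) (hσ : 0 < σ)
    (hpos : ∀ z, 1 < z → 0 < g z)
    (hcont : ContinuousOn g (Set.Ioi 1))
    (hdiff : ∀ z, 1 < z → DifferentiableAt ℝ g z)
    (hlim1 : Tendsto (fun z => z ^ g z) (𝓝[>] (1 : ℝ)) (𝓝 1))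
    (hlim2 : Tendsto (fun z => z ^ g z) atTop atTop)
    (hineq : ∀ z, 1 < z → deriv g z / g z > -1 / (z * Real.log z))
    (F : ℝ → ℝ)
    (hF : ∀ x, F x = if σ < x then 1 - (x / σ) ^ (-(g (x / σ))) else 0) :
    Monotone F ∧ (∀ x, ContinuousWithinAt F (Set.Ici x) x) ∧
      Tendsto F atBot (𝓝 0) ∧ Tendsto F atTop (𝓝 1) := by
  set φ : ℝ → ℝ := fun z => g z * Real.log z with hφdef
  have hz0 : ∀ z : ℝ, 1 < z → (0:ℝ) < z := fun z hz => lt_trans one_pos hz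
  -- rpow rewrites
  have hrw : ∀ z : ℝ, 1 < z → z ^ (-(g z)) = Real.exp (-(φ z)) := by
    intro z hz
    rw [Real.rpow_def_of_pos (hz0 z hz)]
    congr 1
    simp [hφdef]; ring
  -- φ has positive derivative
  have hφderiv : ∀ z ∈ Ioi (1:ℝ), HasDerivAt φ (deriv g z * Real.log z + g z * z⁻¹) z := by
    intro z hz
    exact ((hdiff z hz).hasDerivAt).mul (Real.hasDerivAt_log (ne_of_gt (hz0 z hz)))
  have hderivpos : ∀ z ∈ Ioi (1:ℝ), 0 < deriv g z * Real.log z + g z * z⁻¹ := by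
    intro z hz
    have hz1 : (1:ℝ) < z := hz
    have hG := hpos z hz1
    have hL : 0 < Real.log z := Real.log_pos hz1
    have hZ := hz0 z hz1
    have h := hineq z hz1
    rw [gt_iff_lt, div_lt_div_iff₀ (by positivity) hG] at h
    have h2 : 0 < (deriv g z * Real.log z + g z * z⁻¹) * z := by
      have heq : (deriv g z * Real.log z + g z * z⁻¹) * z
          = deriv g z * (z * Real.log z) + g z := by
        field_simp
      rw [heq]; nlinarith
    nlinarith
  have hφcont : ContinuousOn φ (Ioi (1:ℝ)) := by
    apply hcont.mul
    intro z hz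
    exact (Real.continuousAt_log (ne_of_gt (hz0 z hz))).continuousWithinAt
  have hmono : StrictMonoOn φ (Ioi (1:ℝ)) := by
    apply strictMonoOn_of_deriv_pos (convex_Ioi 1) hφcont
    intro z hz
    rw [interior_Ioi] at hz
    rw [(hφderiv z hz).deriv]
    exact hderivpos z hz
  -- φ tends to 0 at 1⁺
  have hφ0 : Tendsto φ (𝓝[>] (1:ℝ)) (𝓝 0) := by
    have h := (Real.continuousAt_log one_ne_zero).tendsto.comp hlim1
    rw [Real.log_one] at h
    refine h.congr' ?_
    filter_upwards [self_mem_nhdsWithin] with z hz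
    simp only [Function.comp]
    rw [Real.log_rpow (hz0 z hz)]
  -- φ positive on (1,∞)
  have hφpos : ∀ z, 1 < z → 0 < φ z := by
    intro z hz
    have hw1 : (1:ℝ) < (1+z)/2 := by linarith
    have hwz : (1+z)/2 < z := by linarith
    have hge : 0 ≤ φ ((1+z)/2) := by
      refine le_of_tendsto hφ0 ?_
      filter_upwards [Ioo_mem_nhdsGT_of_mem (Set.mem_Ico.mpr ⟨le_rfl, hw1⟩)] with u hu
      exact (hmono hu.1 hw1 hu.2).le
    exact lt_of_le_of_lt hge (hmono hw1 (lt_trans hw1 hwz) hwz)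
  -- F rewrites
  have hF1 : ∀ x, σ < x → F x = 1 - Real.exp (-(φ (x/σ))) := by
    intro x hx
    have hx' : 1 < x / σ := (one_lt_div hσ).2 hx
    rw [hF x, if_pos hx, hrw _ hx']
  have hF0 : ∀ x, x ≤ σ → F x = 0 := by
    intro x hx
    rw [hF x, if_neg (not_lt.mpr hx)]
  -- Monotone
  have hmonoF : Monotone F := by
    intro x y hxy
    by_cases hx : σ < x
    · have hy : σ < y := lt_of_lt_of_le hx hxy
      rw [hF1 x hx, hF1 y hy]
      have hx' : 1 < x / σ := (one_lt_div hσ).2 hx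
      have hy' : 1 < y / σ := (one_lt_div hσ).2 hy
      have hd : x / σ ≤ y / σ := by gcongr
      have := hmono.monotoneOn hx' hy' hd
      have := Real.exp_le_exp.mpr (neg_le_neg this)
      linarith
    · rw [hF0 x (not_lt.1 hx)]
      by_cases hy : σ < y
      · rw [hF1 y hy]
        have hy' : 1 < y / σ := (one_lt_div hσ).2 hy
        have := hφpos _ hy'
        have : Real.exp (-(φ (y/σ))) ≤ 1 := Real.exp_le_one_iff.mpr (by linarith)
        linarith
      · rw [hF0 y (not_lt.1 hy)]
  refine ⟨hmonoF, ?_, ?_, ?_⟩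
  · -- right-continuity
    intro x
    rcases lt_trichotomy x σ with hx | hx | hx
    · -- x < σ : F is 0 near x
      have : ContinuousAt F x := by
        apply continuousAt_const.congr (f := fun _ => (0:ℝ))
        filter_upwards [Iio_mem_nhds hx] with y hy
        exact (hF0 y (le_of_lt hy)).symm
      exact this.continuousWithinAt
    · -- x = σ
      subst hx
      rw [← continuousWithinAt_Ioi_iff_Ici]
      unfold ContinuousWithinAt
      rw [hF0 x le_rfl]
      have hdiv : Tendsto (fun y => y / x) (𝓝[>] x) (𝓝[>] (1:ℝ)) := by
        apply tendsto_nhdsWithin_of_tendsto_nhds_of_eventually_within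
        · have : Tendsto (fun y : ℝ => y / x) (𝓝 x) (𝓝 (x / x)) :=
            (continuousAt_id.div_const x)
          rw [div_self (ne_of_gt hσ)] at this
          exact this.mono_left nhdsWithin_le_nhds
        · filter_upwards [self_mem_nhdsWithin] with y hy
          exact (one_lt_div hσ).2 hy
      have h := hlim1.comp hdiv
      have hinv : Tendsto (fun y => ((y/x) ^ g (y/x))⁻¹) (𝓝[>] x) (𝓝 1) := by
        have := h.inv₀ one_ne_zero
        simpa using this
      have h2 : Tendsto (fun y => 1 - ((y/x) ^ g (y/x))⁻¹) (𝓝[>] x) (𝓝 0) := by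
        have := tendsto_const_nhds (x := (1:ℝ)) (f := 𝓝[>] x) |>.sub hinv
        simpa using this
      refine h2.congr' ?_
      filter_upwards [self_mem_nhdsWithin] with y hy
      have hy'' : x < y := hy
      have hy' : 1 < y / x := (one_lt_div hσ).2 hy''
      rw [hF y, if_pos hy'', Real.rpow_neg (le_of_lt (hz0 _ hy'))]
    · -- x > σ : F continuous at x
      have hx' : 1 < x / σ := (one_lt_div hσ).2 hx
      have hcg : ContinuousAt g (x/σ) := hcont.continuousAt (Ioi_mem_nhds hx')
      have h1 : ContinuousAt (fun y : ℝ => y / σ) x := continuousAt_id.div_const σ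
      have h2 : ContinuousAt (g ∘ fun y : ℝ => y / σ) x := ContinuousAt.comp (f := fun y : ℝ => y / σ) hcg h1
      have h3 : ContinuousAt (Real.log ∘ fun y : ℝ => y / σ) x := by
        have hne : x / σ ≠ 0 := ne_of_gt (hz0 _ hx')
        exact ContinuousAt.comp (f := fun y : ℝ => y / σ) (Real.continuousAt_log hne) h1
      have hG : ContinuousAt (fun y : ℝ => 1 - Real.exp (-(g (y/σ) * Real.log (y/σ)))) x :=
        continuousAt_const.sub ((h2.mul h3).neg.rexp)
      have : ContinuousAt F x := by
        apply hG.congr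
        filter_upwards [Ioi_mem_nhds hx] with y hy
        exact (hF1 y hy).symm
      exact this.continuousWithinAt
  · -- atBot
    refine (tendsto_const_nhds (x := (0:ℝ))).congr' ?_
    filter_upwards [eventually_le_atBot σ] with y hy
    exact (hF0 y hy).symm
  · -- atTop
    have hdiv : Tendsto (fun y : ℝ => y / σ) atTop atTop :=
      tendsto_id.atTop_div_const hσ
    have h := hlim2.comp hdiv
    have hinv : Tendsto (fun y => ((y/σ) ^ g (y/σ))⁻¹) atTop (𝓝 0) :=
      h.inv_tendsto_atTop
    have h2 : Tendsto (fun y => 1 - ((y/σ) ^ g (y/σ))⁻¹) atTop (𝓝 1) := by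
      have := (tendsto_const_nhds (x := (1:ℝ)) (f := atTop)).sub hinv
      simpa using this
    refine h2.congr' ?_
    filter_upwards [eventually_gt_atTop σ] with y hy
    have hy' : 1 < y / σ := (one_lt_div hσ).2 hy
    rw [hF y, if_pos hy, Real.rpow_neg (le_of_lt (hz0 _ hy'))]
end

section
/- For α > 0 and β > -1, the function g(z) = α (log z / (1 + log z))^β satisfies the GPL conditions: lim_{z→1⁺} z^{g(z)} = 1, lim_{z→∞} z^{g(z)} = ∞, and g'(z)/g(z) > -1/(z log z) for all z > 1. -/
open Real Filter Set Topology

/-- for α > 0 and β > -1, g(z) = α (log z / (1 + log z))^β satisfies the GPL conditions. -/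
theorem gpl_relevant_satisfies_gpl (α β : ℝ) (hα : 0 < α) (hβ : -1 < β)
    (g : ℝ → ℝ) (hg : ∀ z, g z = α * (Real.log z / (1 + Real.log z)) ^ β) :
    Tendsto (fun z => z ^ g z) (𝓝[>] (1 : ℝ)) (𝓝 1) ∧
    Tendsto (fun z => z ^ g z) atTop atTop ∧
    (∀ z, 1 < z → deriv g z / g z > -1 / (z * Real.log z)) := by
  -- ratio l/(1+l) → 1 at infinity
  have hratio : Tendsto (fun l : ℝ => l / (1 + l)) atTop (𝓝 1) := by
    have h0 : Tendsto (fun l : ℝ => (1 + l)⁻¹) atTop (𝓝 0) :=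
      tendsto_inv_atTop_zero.comp (tendsto_atTop_add_const_left _ 1 tendsto_id)
    have h1 : Tendsto (fun l : ℝ => 1 - (1 + l)⁻¹) atTop (𝓝 1) := by
      simpa using (tendsto_const_nhds.sub h0)
    refine h1.congr' ?_
    filter_upwards [eventually_gt_atTop (0 : ℝ)] with l hl
    have h1l : (1 : ℝ) + l ≠ 0 := by positivity
    field_simp
    ring
  constructor
  · -- limit at 1⁺
    have hlog : Tendsto Real.log (𝓝[>] (1 : ℝ)) (𝓝[>] 0) := by
      rw [tendsto_nhdsWithin_iff]
      constructor
      · have := (Real.continuousAt_log (one_ne_zero : (1:ℝ) ≠ 0)).tendsto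
        simp only [Real.log_one] at this
        exact this.mono_left nhdsWithin_le_nhds
      · filter_upwards [self_mem_nhdsWithin] with z hz
        exact Real.log_pos hz
    have hh : Tendsto (fun l : ℝ => α * (l / (1 + l)) ^ β * l) (𝓝[>] (0 : ℝ)) (𝓝 0) := by
      have h1 : Tendsto (fun l : ℝ => l ^ (β + 1)) (𝓝 (0 : ℝ)) (𝓝 0) := by
        have := (Real.continuousAt_rpow_const 0 (β + 1) (Or.inr (by linarith))).tendsto
        rwa [Real.zero_rpow (by linarith : β + 1 ≠ 0)] at this
      have h2 : Tendsto (fun l : ℝ => (1 + l) ^ β) (𝓝 (0 : ℝ)) (𝓝 1) := by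
        have hc : Tendsto (fun l : ℝ => (1 : ℝ) + l) (𝓝 0) (𝓝 1) := by
          simpa [Pi.add_def] using ((continuous_const.add continuous_id).tendsto (0:ℝ))
        have := ((Real.continuousAt_rpow_const 1 β (Or.inl one_ne_zero)).tendsto).comp hc
        simpa [Real.one_rpow, Function.comp_def] using this
      have h3 : Tendsto (fun l : ℝ => α * (l ^ (β + 1) / (1 + l) ^ β)) (𝓝 (0 : ℝ)) (𝓝 0) := by
        have := (h1.div h2 one_ne_zero).const_mul α
        simpa using this
      refine (h3.mono_left nhdsWithin_le_nhds).congr' ?_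
      filter_upwards [self_mem_nhdsWithin] with l (hl : 0 < l)
      have h1l : (0 : ℝ) < 1 + l := by linarith
      rw [Real.div_rpow hl.le h1l.le, Real.rpow_add_one hl.ne']
      ring
    have hmain : Tendsto (fun z : ℝ => Real.log z * g z) (𝓝[>] (1 : ℝ)) (𝓝 0) := by
      have := hh.comp hlog
      refine this.congr ?_
      intro z
      simp only [Function.comp, hg z]
      ring
    have hexp : Tendsto (fun z : ℝ => Real.exp (Real.log z * g z)) (𝓝[>] (1 : ℝ)) (𝓝 1) := by
      have := (Real.continuous_exp.continuousAt (x := (0:ℝ))).tendsto.comp hmain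
      simpa [Function.comp_def] using this
    refine hexp.congr' ?_
    filter_upwards [self_mem_nhdsWithin] with z (hz : 1 < z)
    rw [Real.rpow_def_of_pos (by linarith)]
  constructor
  · -- limit at ∞
    have hgα : Tendsto g atTop (𝓝 α) := by
      have hc : Tendsto (fun z : ℝ => Real.log z / (1 + Real.log z)) atTop (𝓝 1) :=
        hratio.comp Real.tendsto_log_atTop
      have := ((Real.continuousAt_rpow_const 1 β (Or.inl one_ne_zero)).tendsto).comp hc
      have h2 : Tendsto (fun z : ℝ => (Real.log z / (1 + Real.log z)) ^ β) atTop (𝓝 1) := by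
        simpa [Real.one_rpow, Function.comp_def] using this
      have := h2.const_mul α
      simp only [mul_one] at this
      refine this.congr fun z => (hg z).symm
    have hmul : Tendsto (fun z : ℝ => Real.log z * g z) atTop atTop :=
      Real.tendsto_log_atTop.atTop_mul_pos hα hgα
    have hexp : Tendsto (fun z : ℝ => Real.exp (Real.log z * g z)) atTop atTop :=
      Real.tendsto_exp_atTop.comp hmul
    refine hexp.congr' ?_
    filter_upwards [eventually_gt_atTop (0 : ℝ)] with z hz
    rw [Real.rpow_def_of_pos hz]
  · -- derivative condition
    intro z hz
    have hz0 : (0 : ℝ) < z := by linarith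
    set l := Real.log z with hl_def
    have hl : 0 < l := Real.log_pos hz
    have h1l : (0 : ℝ) < 1 + l := by linarith
    set t := l / (1 + l) with ht_def
    have ht : 0 < t := div_pos hl h1l
    have hT : 0 < t ^ β := Real.rpow_pos_of_pos ht β
    -- derivative of g
    have hlog' : HasDerivAt Real.log z⁻¹ z := Real.hasDerivAt_log hz0.ne'
    have hden : HasDerivAt (fun z => 1 + Real.log z) z⁻¹ z := by
      simpa using (hlog'.const_add 1)
    have hquot : HasDerivAt (fun z => Real.log z / (1 + Real.log z))
        ((z⁻¹ * (1 + l) - l * z⁻¹) / (1 + l) ^ 2) z :=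
      hlog'.div hden h1l.ne'
    have hpow : HasDerivAt (fun z => (Real.log z / (1 + Real.log z)) ^ β)
        ((z⁻¹ * (1 + l) - l * z⁻¹) / (1 + l) ^ 2 * β * t ^ (β - 1)) z :=
      hquot.rpow_const (Or.inl ht.ne')
    have hgd : HasDerivAt g
        (α * ((z⁻¹ * (1 + l) - l * z⁻¹) / (1 + l) ^ 2 * β * t ^ (β - 1))) z := by
      have := hpow.const_mul α
      refine this.congr_of_eventuallyEq ?_
      filter_upwards with w
      exact (hg w)
    have hderiv : deriv g z
        = α * ((z⁻¹ * (1 + l) - l * z⁻¹) / (1 + l) ^ 2 * β * t ^ (β - 1)) := hgd.deriv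
    have htb1 : t ^ (β - 1) = t ^ β / t := by
      rw [Real.rpow_sub ht, Real.rpow_one]
    have hinv : t⁻¹ = (1 + l) / l := by rw [ht_def, inv_div]
    have hratio_eq : deriv g z / g z = β / (z * l * (1 + l)) := by
      rw [hderiv, hg z, htb1, ← ht_def, div_eq_mul_inv (t ^ β) t, hinv]
      generalize hTT : t ^ β = T at hT
      field_simp
      ring
    rw [hratio_eq, gt_iff_lt, div_lt_div_iff₀ (by positivity) (by positivity)]
    nlinarith [mul_pos hz0 hl, mul_pos (mul_pos hz0 hl) h1l]
end

section
/- The survival function S(x) = exp{-α [log(x/σ)]^{β+1}/[log(x/σ)+1]^β} of the GPL(α,β,σ) distribution is regularly varying at infinity with index -α: for every t > 0, lim_{x→∞} S(tx)/S(x) = t^{-α}. -/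
open Real Filter Topology

private lemma key_lim (β : ℝ) :
    Tendsto (fun L : ℝ => L ^ (β + 1) / (L + 1) ^ β - L) atTop (𝓝 (-β)) := by
  have hd : HasDerivAt (fun y : ℝ => y ^ β) β 1 := by
    have := Real.hasDerivAt_rpow_const (x := 1) (p := β) (Or.inl one_ne_zero)
    simpa using this
  have hslope : Tendsto (fun y : ℝ => (y ^ β - 1) / (y - 1)) (𝓝[≠] 1) (𝓝 β) := by
    have h := hasDerivAt_iff_tendsto_slope.mp hd
    apply h.congr
    intro y
    rw [slope_def_field, Real.one_rpow]
  have h1 : Tendsto (fun L : ℝ => L + 1) atTop atTop :=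
    tendsto_atTop_add_const_right _ 1 tendsto_id
  have hinv : Tendsto (fun L : ℝ => (L + 1)⁻¹) atTop (𝓝 0) := h1.inv_tendsto_atTop
  have hA : Tendsto (fun L : ℝ => L / (L + 1)) atTop (𝓝 1) := by
    have := (tendsto_const_nhds (x := (1:ℝ))).sub hinv
    rw [sub_zero] at this
    apply this.congr'
    filter_upwards [eventually_gt_atTop 0] with L hL
    have : L + 1 ≠ 0 := by positivity
    field_simp
    ring
  have hA' : Tendsto (fun L : ℝ => L / (L + 1)) atTop (𝓝[≠] 1) := by
    rw [tendsto_nhdsWithin_iff]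
    refine ⟨hA, ?_⟩
    filter_upwards [eventually_gt_atTop 0] with L hL
    have h1 : (0:ℝ) < L + 1 := by linarith
    have : L / (L + 1) < 1 := (div_lt_one h1).mpr (by linarith)
    exact ne_of_lt this
  have hQ : Tendsto (fun L : ℝ => ((L / (L + 1)) ^ β - 1) / (L / (L + 1) - 1))
      atTop (𝓝 β) := hslope.comp hA'
  have hprod := (hA.neg).mul hQ
  rw [neg_one_mul] at hprod
  apply hprod.congr'
  filter_upwards [eventually_gt_atTop 0] with L hL
  have hL1 : (0:ℝ) < L + 1 := by linarith
  have hAβ : (L / (L + 1)) ^ β = L ^ β / (L + 1) ^ β := Real.div_rpow hL.le hL1.le β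
  have hsub : L / (L + 1) - 1 = -(1 / (L + 1)) := by field_simp; ring
  have hpow : L ^ (β + 1) = L ^ β * L := Real.rpow_add_one (ne_of_gt hL) β
  have hne : (L + 1) ^ β ≠ 0 := by positivity
  rw [hAβ, hsub, hpow]
  field_simp

/-- the GPL(α,β,σ) survival function is regularly varying at infinity
with index -α: for every t > 0, lim_{x→∞} S(tx)/S(x) = t^{-α}. -/
theorem gpl_regularly_varying (α β σ : ℝ) (hα : 0 < α) (hβ : -1 < β) (hσ : 0 < σ)
    (S : ℝ → ℝ)
    (hS : ∀ x, σ ≤ x →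
      S x = Real.exp (-α * (Real.log (x / σ)) ^ (β + 1) / (Real.log (x / σ) + 1) ^ β)) :
    ∀ t : ℝ, 0 < t → Tendsto (fun x => S (t * x) / S x) atTop (𝓝 (t ^ (-α))) := by
  intro t ht
  set c := Real.log t with hc
  -- g(L+c) - g(L) → c
  have hshift : Tendsto (fun L : ℝ =>
      (L + c) ^ (β + 1) / ((L + c) + 1) ^ β - L ^ (β + 1) / (L + 1) ^ β)
      atTop (𝓝 c) := by
    have h1 := (key_lim β).comp (tendsto_atTop_add_const_right atTop c tendsto_id)
    have h2 := key_lim β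
    have h3 := (h1.sub h2).add (tendsto_const_nhds (x := c))
    have : -β - -β + c = c := by ring
    rw [this] at h3
    apply h3.congr
    intro L
    simp only [Function.comp_apply, id_eq]
    ring
  have hLtop : Tendsto (fun x : ℝ => Real.log (x / σ)) atTop atTop :=
    Real.tendsto_log_atTop.comp (tendsto_id.atTop_div_const hσ)
  have hcomp := hshift.comp hLtop
  have hmain : Tendsto (fun x : ℝ => Real.exp (-α *
      ((Real.log (x / σ) + c) ^ (β + 1) / ((Real.log (x / σ) + c) + 1) ^ β
        - Real.log (x / σ) ^ (β + 1) / (Real.log (x / σ) + 1) ^ β)))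
      atTop (𝓝 (Real.exp (-α * c))) := by
    exact (Real.continuous_exp.tendsto _).comp ((tendsto_const_nhds (x := -α)).mul hcomp)
  have hval : Real.exp (-α * c) = t ^ (-α) := by
    rw [Real.rpow_def_of_pos ht, hc, mul_comm]
  rw [← hval]
  apply hmain.congr'
  filter_upwards [eventually_ge_atTop (max σ (σ / t)), eventually_gt_atTop 0] with x hx hx0
  have hxσ : σ ≤ x := le_trans (le_max_left _ _) hx
  have htx : σ ≤ t * x := by
    have h1 : σ / t ≤ x := le_trans (le_max_right _ _) hx
    calc σ = t * (σ / t) := by field_simp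
    _ ≤ t * x := by nlinarith
  have hlog : Real.log (t * x / σ) = Real.log (x / σ) + c := by
    rw [mul_div_assoc, Real.log_mul (ne_of_gt ht) (by positivity), hc, add_comm]
  rw [hS x hxσ, hS (t * x) htx, ← Real.exp_sub, hlog]
  ring_nf
end

section
/- The function L(x) = (x/σ)^{-α([log(x/σ)/(log(x/σ)+1)]^β - 1)} is slowly varying at infinity: for every t > 0, lim_{x→∞} L(tx)/L(x) = 1. Consequently the GPL(α,β,σ) survival function factors as S(x) = L(x)(x/σ)^{-α}. -/
open Real Filter Topology

lemma aux_tendsto (α β : ℝ) :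
    Tendsto (fun u : ℝ => -α * ((u / (u + 1)) ^ β - 1) * u) atTop (𝓝 (α * β)) := by
  have hd : HasDerivAt (fun v : ℝ => (1 + v) ^ β) β 0 := by
    have h1 : HasDerivAt (fun v : ℝ => 1 + v) 1 0 := (hasDerivAt_id 0).const_add 1
    have := h1.rpow_const (p := β) (by left; norm_num)
    simpa using this
  have hslope : Tendsto (fun v : ℝ => ((1 + v) ^ β - 1) / v) (𝓝[≠] 0) (𝓝 β) := by
    have := hasDerivAt_iff_tendsto_slope.1 hd
    simp only [slope_def_field, div_eq_mul_inv] at this ⊢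
    convert this using 2 with v
    simp [slope, div_eq_mul_inv]
    ring
  have hv : Tendsto (fun u : ℝ => -1 / (u + 1)) atTop (𝓝[≠] (0:ℝ)) := by
    rw [tendsto_nhdsWithin_iff]
    constructor
    · have : Tendsto (fun u : ℝ => u + 1) atTop atTop := tendsto_atTop_add_const_right _ 1 tendsto_id
      simpa [div_eq_mul_inv] using (this.inv_tendsto_atTop).const_mul (-1 : ℝ)
    · filter_upwards [eventually_gt_atTop (0:ℝ)] with u hu
      have : (0:ℝ) < u + 1 := by linarith
      simp [Set.mem_compl_iff, div_eq_iff this.ne']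
  have h1 : Tendsto (fun u : ℝ => ((1 + (-1 / (u + 1))) ^ β - 1) / (-1 / (u + 1)))
      atTop (𝓝 β) := hslope.comp hv
  have h2 : Tendsto (fun u : ℝ => (-1 / (u + 1)) * u) atTop (𝓝 (-1)) := by
    have ha : Tendsto (fun u : ℝ => -1 + 1 / (u + 1)) atTop (𝓝 (-1)) := by
      have : Tendsto (fun u : ℝ => u + 1) atTop atTop := tendsto_atTop_add_const_right _ 1 tendsto_id
      have := this.inv_tendsto_atTop
      simpa [one_div] using (tendsto_const_nhds (x := (-1:ℝ))).add this
    refine ha.congr' ?_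
    filter_upwards [eventually_gt_atTop (0:ℝ)] with u hu
    have : (0:ℝ) < u + 1 := by linarith
    field_simp
    ring
  have h3 := ((h1.mul h2).const_mul (-α))
  have : -α * (β * -1) = α * β := by ring
  rw [this] at h3
  refine h3.congr' ?_
  filter_upwards [eventually_gt_atTop (0:ℝ)] with u hu
  have h0 : (0:ℝ) < u + 1 := by linarith
  have hvne : -1 / (u + 1) ≠ 0 := by
    simp [div_eq_iff h0.ne']
  have hbase : 1 + -1 / (u + 1) = u / (u + 1) := by field_simp; ring
  rw [hbase]
  field_simp

/-- L(x) = (x/σ)^{-α([log(x/σ)/(log(x/σ)+1)]^β - 1)} is slowly varying at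
infinity, and the GPL(α,β,σ) survival function factors as S(x) = L(x) (x/σ)^{-α}. -/
theorem gpl_slowly_varying_factor (α β σ : ℝ) (hα : 0 < α) (hβ : -1 < β) (hσ : 0 < σ)
    (S L : ℝ → ℝ)
    (hS : ∀ x, σ ≤ x →
      S x = Real.exp (-α * (Real.log (x / σ)) ^ (β + 1) / (Real.log (x / σ) + 1) ^ β))
    (hL : ∀ x, L x =
      (x / σ) ^ (-α * ((Real.log (x / σ) / (Real.log (x / σ) + 1)) ^ β - 1))) :
    (∀ t : ℝ, 0 < t → Tendsto (fun x => L (t * x) / L x) atTop (𝓝 1)) ∧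
    (∀ x, σ < x → S x = L x * (x / σ) ^ (-α)) := by
  set f : ℝ → ℝ := fun x =>
    -α * ((Real.log (x / σ) / (Real.log (x / σ) + 1)) ^ β - 1) * Real.log (x / σ) with hf
  have hdiv : Tendsto (fun x : ℝ => x / σ) atTop atTop :=
    tendsto_id.atTop_div_const hσ
  have hlog : Tendsto (fun x : ℝ => Real.log (x / σ)) atTop atTop :=
    Real.tendsto_log_atTop.comp hdiv
  have hftend : Tendsto f atTop (𝓝 (α * β)) := (aux_tendsto α β).comp hlog
  have hLexp : ∀ x : ℝ, 0 < x → L x = Real.exp (f x) := by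
    intro x hx
    have hxσ : 0 < x / σ := div_pos hx hσ
    rw [hL x, Real.rpow_def_of_pos hxσ, hf]
    ring_nf
  constructor
  · intro t ht
    have htx : Tendsto (fun x : ℝ => t * x) atTop atTop :=
      Tendsto.const_mul_atTop ht tendsto_id
    have hft : Tendsto (fun x => f (t * x)) atTop (𝓝 (α * β)) := hftend.comp htx
    have hsub : Tendsto (fun x => f (t * x) - f x) atTop (𝓝 0) := by
      simpa using hft.sub hftend
    have hexp : Tendsto (fun x => Real.exp (f (t * x) - f x)) atTop (𝓝 1) := by
      simpa [Function.comp_def] using (Real.continuous_exp.tendsto 0).comp hsub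
    refine hexp.congr' ?_
    filter_upwards [eventually_gt_atTop (0:ℝ)] with x hx
    rw [hLexp x hx, hLexp (t * x) (by positivity), ← Real.exp_sub]
  · intro x hx
    have hxσ : 1 < x / σ := (one_lt_div hσ).2 hx
    have hxσ0 : 0 < x / σ := by linarith
    set u := Real.log (x / σ) with hu
    have hu0 : 0 < u := Real.log_pos hxσ
    have hu1 : 0 < u + 1 := by linarith
    rw [hS x hx.le, hL x, ← Real.rpow_add hxσ0, Real.rpow_def_of_pos hxσ0, ← hu]
    congr 1
    have hdivr : (u / (u + 1)) ^ β = u ^ β / (u + 1) ^ β :=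
      Real.div_rpow hu0.le hu1.le β
    have hadd : u ^ (β + 1) = u ^ β * u := Real.rpow_add_one hu0.ne' β
    rw [hadd, hdivr]
    field_simp
    ring
end

section
/- The GPL(α,β,σ) distribution satisfies the von Mises condition for the Fréchet domain of attraction: lim_{x→∞} x f(x)/S(x) = α, where f is the density and S the survival function. Equivalently, lim_{x→∞} α [(log(x/σ)+1+β)/(log(x/σ)+1)] [log(x/σ)/(log(x/σ)+1)]^β = α. -/
open Real Filter Topology

theorem aux_ratio (c : ℝ) : Tendsto (fun L : ℝ => (L + 1 + c) / (L + 1)) atTop (𝓝 1) := by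
  have h0 : Tendsto (fun L : ℝ => c / (L + 1)) atTop (𝓝 0) :=
    tendsto_const_nhds.div_atTop (tendsto_atTop_add_const_right _ 1 tendsto_id)
  have h1 : Tendsto (fun L : ℝ => 1 + c / (L + 1)) atTop (𝓝 (1 + 0)) := h0.const_add 1
  rw [add_zero] at h1
  refine h1.congr' ?_
  filter_upwards [eventually_gt_atTop (0 : ℝ)] with L hL
  have hL1 : L + 1 ≠ 0 := by positivity
  field_simp

/-- the GPL(α,β,σ) distribution satisfies the von Mises condition for the
Fréchet domain of attraction: lim_{x→∞} x f(x)/S(x) = α. -/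
theorem gpl_von_mises (α β σ : ℝ) (hα : 0 < α) (hβ : -1 < β) (hσ : 0 < σ)
    (S f : ℝ → ℝ)
    (hS : ∀ x, σ ≤ x →
      S x = Real.exp (-α * (Real.log (x / σ)) ^ (β + 1) / (Real.log (x / σ) + 1) ^ β))
    (hf : ∀ x, σ ≤ x →
      f x = (α / x) * ((Real.log (x / σ) + 1 + β) / (Real.log (x / σ) + 1)) *
        (Real.log (x / σ) / (Real.log (x / σ) + 1)) ^ β * S x) :
    Tendsto (fun x => x * f x / S x) atTop (𝓝 α) ∧
    Tendsto (fun x => α * ((Real.log (x / σ) + 1 + β) / (Real.log (x / σ) + 1)) *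
      (Real.log (x / σ) / (Real.log (x / σ) + 1)) ^ β) atTop (𝓝 α) := by
  have hL : Tendsto (fun x => Real.log (x / σ)) atTop atTop :=
    Real.tendsto_log_atTop.comp (tendsto_id.atTop_div_const hσ)
  have hA := aux_ratio β
  have hB0 : Tendsto (fun L : ℝ => L / (L + 1)) atTop (𝓝 1) := by
    have := aux_ratio (-1)
    simpa using this
  have hB : Tendsto (fun L : ℝ => (L / (L + 1)) ^ β) atTop (𝓝 1) := by
    have := hB0.rpow_const (Or.inl one_ne_zero) (p := β)
    simpa using this
  have hg : Tendsto (fun L : ℝ => α * ((L + 1 + β) / (L + 1)) * (L / (L + 1)) ^ β)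
      atTop (𝓝 α) := by
    have := (tendsto_const_nhds (x := α) (f := atTop)).mul hA |>.mul hB
    simpa using this
  have h2 : Tendsto (fun x => α * ((Real.log (x / σ) + 1 + β) / (Real.log (x / σ) + 1)) *
      (Real.log (x / σ) / (Real.log (x / σ) + 1)) ^ β) atTop (𝓝 α) := hg.comp hL
  refine ⟨?_, h2⟩
  refine h2.congr' ?_
  filter_upwards [eventually_ge_atTop σ, eventually_gt_atTop (0 : ℝ)] with x hx hx0
  have hSne : S x ≠ 0 := by rw [hS x hx]; exact (Real.exp_pos _).ne'
  rw [hf x hx, show x * (α / x * ((Real.log (x / σ) + 1 + β) / (Real.log (x / σ) + 1)) *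
      (Real.log (x / σ) / (Real.log (x / σ) + 1)) ^ β * S x)
    = α * ((Real.log (x / σ) + 1 + β) / (Real.log (x / σ) + 1)) *
      (Real.log (x / σ) / (Real.log (x / σ) + 1)) ^ β * S x * (x * x⁻¹) from by ring,
    mul_inv_cancel₀ hx0.ne', mul_one, mul_div_cancel_right₀ _ hSne]
end
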